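/- Let b > 0 and let Ψ : ℝ × ℝ → ℝ be continuous on [−b,b] × [−1,1] with continuous partial derivative ∂ₓΨ on [−b,b] × [−1,1], satisfying Ψ(b,μ) = 0 for all μ ∈ [−1,0] and Ψ(−b,μ) = 0 for all μ ∈ [0,1]. Let Σ_t : ℝ → ℝ be continuous on [−b,b] and let σ_* > 0 satisfy Σ_t(x) ≥ σ_* for all x ∈ [−b,b]. Then (∫_{−1}^{1} ∫_{−b}^{b} Ψ(x,μ)² dx dμ)^{1/2} ≤ σ_*⁻¹ (∫_{−1}^{1} ∫_{−b}^{b} (μ ∂ₓΨ(x,μ) + Σ_t(x)Ψ(x,μ))² dx dμ)^{1/2}. -/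

import Mathlib

open Set

/-- `L²` residual bound for 1D slab transport with vacuum boundary condition:
`‖Ψ‖₀ ≤ σ_*⁻¹ ‖𝒟Ψ‖₀`. -/
theorem transport_L2_residual_bound
    (b : ℝ) (hb : 0 < b) (Ψ Ψx : ℝ → ℝ → ℝ) (sigmaT : ℝ → ℝ) (σstar : ℝ)
    (hΨ : ContinuousOn (fun p : ℝ × ℝ => Ψ p.1 p.2) (Icc (-b) b ×ˢ Icc (-1) 1))
    (hΨx : ContinuousOn (fun p : ℝ × ℝ => Ψx p.1 p.2) (Icc (-b) b ×ˢ Icc (-1) 1))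
    (hderiv : ∀ μ ∈ Icc (-1 : ℝ) 1, ∀ x ∈ Icc (-b) b,
      HasDerivWithinAt (fun t => Ψ t μ) (Ψx x μ) (Icc (-b) b) x)
    (hsigmaT : ContinuousOn sigmaT (Icc (-b) b))
    (hσstar : 0 < σstar)
    (hlow : ∀ x ∈ Icc (-b) b, σstar ≤ sigmaT x)
    (hin₁ : ∀ μ ∈ Icc (-1 : ℝ) 0, Ψ b μ = 0)
    (hin₂ : ∀ μ ∈ Icc (0 : ℝ) 1, Ψ (-b) μ = 0) :
    Real.sqrt (∫ μ in (-1 : ℝ)..1, ∫ x in (-b)..b, (Ψ x μ) ^ 2)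
      ≤ σstar⁻¹ * Real.sqrt (∫ μ in (-1 : ℝ)..1, ∫ x in (-b)..b,
          (μ * Ψx x μ + sigmaT x * Ψ x μ) ^ 2) := by
  have hbb : (-b : ℝ) ≤ b := by linarith
  -- clamping functions
  set cx : ℝ → ℝ := fun x => max (-b) (min b x) with hcxdef
  set cm : ℝ → ℝ := fun μ => max (-1) (min 1 μ) with hcmdef
  have hcx_cont : Continuous cx := continuous_const.max (continuous_const.min continuous_id)
  have hcm_cont : Continuous cm := continuous_const.max (continuous_const.min continuous_id)
  have hcx_mem : ∀ x, cx x ∈ Icc (-b) b :=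
    fun x => ⟨le_max_left _ _, max_le hbb (min_le_left _ _)⟩
  have hcm_mem : ∀ μ, cm μ ∈ Icc (-1 : ℝ) 1 :=
    fun μ => ⟨le_max_left _ _, max_le (by norm_num) (min_le_left _ _)⟩
  have hcx_eq : ∀ x ∈ Icc (-b) b, cx x = x := by
    intro x hx
    simp only [hcxdef]
    rw [min_eq_right hx.2, max_eq_right hx.1]
  have hcm_eq : ∀ μ ∈ Icc (-1 : ℝ) 1, cm μ = μ := by
    intro μ hμ
    simp only [hcmdef]
    rw [min_eq_right hμ.2, max_eq_right hμ.1]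
  -- clamped functions are globally continuous
  have hΨc : Continuous fun p : ℝ × ℝ => Ψ (cx p.1) (cm p.2) :=
    hΨ.comp_continuous ((hcx_cont.comp continuous_fst).prodMk (hcm_cont.comp continuous_snd))
      (fun p => ⟨hcx_mem _, hcm_mem _⟩)
  have hΨxc : Continuous fun p : ℝ × ℝ => Ψx (cx p.1) (cm p.2) :=
    hΨx.comp_continuous ((hcx_cont.comp continuous_fst).prodMk (hcm_cont.comp continuous_snd))
      (fun p => ⟨hcx_mem _, hcm_mem _⟩)
  have hTc : Continuous fun x : ℝ => sigmaT (cx x) :=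
    hsigmaT.comp_continuous hcx_cont hcx_mem
  -- parametric integrals
  set F : ℝ → ℝ := fun μ => ∫ x in (-b)..b, (Ψ (cx x) (cm μ)) ^ 2 with hFdef
  set G : ℝ → ℝ := fun μ =>
    ∫ x in (-b)..b, (μ * Ψx (cx x) (cm μ) + sigmaT (cx x) * Ψ (cx x) (cm μ)) ^ 2 with hGdef
  have hFcont : Continuous F := by
    apply intervalIntegral.continuous_parametric_intervalIntegral_of_continuous'
      (f := fun μ x => (Ψ (cx x) (cm μ)) ^ 2)
    exact ((hΨc.comp (continuous_snd.prodMk continuous_fst)).pow 2)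
  have hGcont : Continuous G := by
    apply intervalIntegral.continuous_parametric_intervalIntegral_of_continuous'
      (f := fun μ x => (μ * Ψx (cx x) (cm μ) + sigmaT (cx x) * Ψ (cx x) (cm μ)) ^ 2)
    apply Continuous.pow
    apply Continuous.add
    · exact continuous_fst.mul (hΨxc.comp (continuous_snd.prodMk continuous_fst))
    · exact (hTc.comp continuous_snd).mul (hΨc.comp (continuous_snd.prodMk continuous_fst))
  -- slicewise continuity
  have hΨμ : ∀ μ ∈ Icc (-1 : ℝ) 1, ContinuousOn (fun x => Ψ x μ) (Icc (-b) b) := by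
    intro μ hμ
    exact hΨ.comp ((continuous_id.prodMk continuous_const).continuousOn)
      (fun x hx => ⟨hx, hμ⟩)
  have hΨxμ : ∀ μ ∈ Icc (-1 : ℝ) 1, ContinuousOn (fun x => Ψx x μ) (Icc (-b) b) := by
    intro μ hμ
    exact hΨx.comp ((continuous_id.prodMk continuous_const).continuousOn)
      (fun x hx => ⟨hx, hμ⟩)
  -- key slicewise estimate
  have key : ∀ μ ∈ Icc (-1 : ℝ) 1, σstar ^ 2 * F μ ≤ G μ := by
    intro μ hμ
    have hF_eq : F μ = ∫ x in (-b)..b, (Ψ x μ) ^ 2 := by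
      apply intervalIntegral.integral_congr
      intro x hx
      rw [uIcc_of_le hbb] at hx
      simp only [hcx_eq x hx, hcm_eq μ hμ]
    have hG_eq : G μ = ∫ x in (-b)..b, (μ * Ψx x μ + sigmaT x * Ψ x μ) ^ 2 := by
      apply intervalIntegral.integral_congr
      intro x hx
      rw [uIcc_of_le hbb] at hx
      simp only [hcx_eq x hx, hcm_eq μ hμ]
    rw [hF_eq, hG_eq]
    -- integrability
    have i1 : IntervalIntegrable (fun x => (Ψ x μ) ^ 2) MeasureTheory.volume (-b) b :=
      ((hΨμ μ hμ).pow 2).intervalIntegrable_of_Icc hbb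
    have i2 : IntervalIntegrable (fun x => 2 * Ψ x μ * Ψx x μ) MeasureTheory.volume (-b) b :=
      (((continuousOn_const.mul (hΨμ μ hμ)).mul (hΨxμ μ hμ))).intervalIntegrable_of_Icc hbb
    have i3 : IntervalIntegrable
        (fun x => (μ * Ψx x μ + sigmaT x * Ψ x μ) ^ 2) MeasureTheory.volume (-b) b :=
      (((continuousOn_const.mul (hΨxμ μ hμ)).add
        (hsigmaT.mul (hΨμ μ hμ))).pow 2).intervalIntegrable_of_Icc hbb
    have i4 : IntervalIntegrable
        (fun x => σstar * μ * (2 * Ψ x μ * Ψx x μ) + σstar ^ 2 * (Ψ x μ) ^ 2)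
        MeasureTheory.volume (-b) b :=
      (i2.const_mul _).add (i1.const_mul _)
    -- fundamental theorem of calculus
    have hFTC : ∫ x in (-b)..b, 2 * Ψ x μ * Ψx x μ = Ψ b μ ^ 2 - Ψ (-b) μ ^ 2 := by
      apply intervalIntegral.integral_eq_sub_of_hasDeriv_right_of_le hbb
      · exact (hΨμ μ hμ).pow 2
      · intro x hx
        have hd : HasDerivAt (fun t => Ψ t μ) (Ψx x μ) x :=
          (hderiv μ hμ x (Ioo_subset_Icc_self hx)).hasDerivAt
            (Icc_mem_nhds hx.1 hx.2)
        have h2 := hd.pow 2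
        have h2' : HasDerivAt (fun t => Ψ t μ ^ 2) (2 * Ψ x μ * Ψx x μ) x := by
          simpa [Pi.pow_def] using h2
        exact h2'.hasDerivWithinAt
      · exact i2
    -- boundary sign
    have hbdry : 0 ≤ σstar * μ * (Ψ b μ ^ 2 - Ψ (-b) μ ^ 2) := by
      rcases le_total μ 0 with h | h
      · rw [hin₁ μ ⟨hμ.1, h⟩]
        nlinarith [mul_nonneg (mul_nonneg hσstar.le (neg_nonneg.2 h)) (sq_nonneg (Ψ (-b) μ))]
      · rw [hin₂ μ ⟨h, hμ.2⟩]
        nlinarith [mul_nonneg (mul_nonneg hσstar.le h) (sq_nonneg (Ψ b μ))]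
    -- pointwise estimate
    have hmono : (∫ x in (-b)..b,
        (σstar * μ * (2 * Ψ x μ * Ψx x μ) + σstar ^ 2 * (Ψ x μ) ^ 2))
        ≤ ∫ x in (-b)..b, (μ * Ψx x μ + sigmaT x * Ψ x μ) ^ 2 := by
      apply intervalIntegral.integral_mono_on hbb i4 i3
      intro x hx
      have hs := hlow x hx
      nlinarith [sq_nonneg (μ * Ψx x μ + (sigmaT x - σstar) * Ψ x μ),
        mul_nonneg (mul_nonneg hσstar.le (sub_nonneg.2 hs)) (sq_nonneg (Ψ x μ))]
    have hsplit : (∫ x in (-b)..b,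
        (σstar * μ * (2 * Ψ x μ * Ψx x μ) + σstar ^ 2 * (Ψ x μ) ^ 2))
        = σstar * μ * (∫ x in (-b)..b, 2 * Ψ x μ * Ψx x μ)
          + σstar ^ 2 * ∫ x in (-b)..b, (Ψ x μ) ^ 2 := by
      rw [intervalIntegral.integral_add (i2.const_mul _) (i1.const_mul _),
        intervalIntegral.integral_const_mul, intervalIntegral.integral_const_mul]
    rw [hsplit, hFTC] at hmono
    linarith
  -- outer integration
  have hFint : IntervalIntegrable F MeasureTheory.volume (-1) 1 :=
    hFcont.intervalIntegrable _ _
  have hGint : IntervalIntegrable G MeasureTheory.volume (-1) 1 :=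
    hGcont.intervalIntegrable _ _
  have houter : σstar ^ 2 * ∫ μ in (-1 : ℝ)..1, F μ ≤ ∫ μ in (-1 : ℝ)..1, G μ := by
    rw [← intervalIntegral.integral_const_mul]
    exact intervalIntegral.integral_mono_on (by norm_num) (hFint.const_mul _) hGint key
  have hFnonneg : 0 ≤ ∫ μ in (-1 : ℝ)..1, F μ := by
    apply intervalIntegral.integral_nonneg (by norm_num)
    intro μ _
    exact intervalIntegral.integral_nonneg hbb (fun x _ => sq_nonneg _)
  -- identify goal integrals with F, G
  have hIF : (∫ μ in (-1 : ℝ)..1, ∫ x in (-b)..b, (Ψ x μ) ^ 2) = ∫ μ in (-1 : ℝ)..1, F μ := by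
    apply intervalIntegral.integral_congr
    intro μ hμ
    rw [uIcc_of_le (by norm_num : (-1 : ℝ) ≤ 1)] at hμ
    apply intervalIntegral.integral_congr
    intro x hx
    rw [uIcc_of_le hbb] at hx
    simp only [hFdef, hcx_eq x hx, hcm_eq μ hμ]
  have hIG : (∫ μ in (-1 : ℝ)..1, ∫ x in (-b)..b, (μ * Ψx x μ + sigmaT x * Ψ x μ) ^ 2)
      = ∫ μ in (-1 : ℝ)..1, G μ := by
    apply intervalIntegral.integral_congr
    intro μ hμ
    rw [uIcc_of_le (by norm_num : (-1 : ℝ) ≤ 1)] at hμ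
    apply intervalIntegral.integral_congr
    intro x hx
    rw [uIcc_of_le hbb] at hx
    simp only [hGdef, hcx_eq x hx, hcm_eq μ hμ]
  rw [hIF, hIG]
  have h1 : Real.sqrt (σstar ^ 2 * ∫ μ in (-1 : ℝ)..1, F μ)
      ≤ Real.sqrt (∫ μ in (-1 : ℝ)..1, G μ) := Real.sqrt_le_sqrt houter
  rw [Real.sqrt_mul (sq_nonneg σstar), Real.sqrt_sq hσstar.le] at h1
  calc Real.sqrt (∫ μ in (-1 : ℝ)..1, F μ)
      = σstar⁻¹ * (σstar * Real.sqrt (∫ μ in (-1 : ℝ)..1, F μ)) := by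
        field_simp
    _ ≤ σstar⁻¹ * Real.sqrt (∫ μ in (-1 : ℝ)..1, G μ) := by
        apply mul_le_mul_of_nonneg_left h1 (inv_nonneg.2 hσstar.le)
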